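/- Let L ⊣ R be an adjunction between symmetric monoidal categories (𝒞, ⊗, 𝕀) and (𝒟, ⊙, 𝕁), with R lax symmetric monoidal, and suppose: (i) the structure maps 𝕀 → R(𝕁) and R(D) ⊗ R(D) → R(D ⊙ D) are isomorphisms for every comonoid D in 𝒟; (ii) every comonoid in 𝒞 is cocommutative; (iii) for every comonoid D in 𝒟, the adjunction counit LR(D) → D is an epimorphism in 𝒟. Then every comonoid in 𝒟 is cocommutative. -/

import Mathlib

open CategoryTheory MonoidalCategory Functor.LaxMonoidal

/-- Theorem 2.2 of Péroux–Shipley. Let `L ⊣ R` be an adjunction between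
symmetric monoidal categories with `R` lax symmetric monoidal, such that
(i) the structure maps `𝕀 ⟶ R(𝕁)` and `R(D) ⊗ R(D) ⟶ R(D ⊙ D)` are isomorphisms for every
comonoid `D` in `𝒟`; (ii) every comonoid in `𝒞` is cocommutative; (iii) for every comonoid `D`
in `𝒟` the adjunction counit `LR(D) ⟶ D` is an epimorphism. Then every comonoid in `𝒟` is
cocommutative. -/
theorem comon_cocomm_of_adjunction
    {𝒞 : Type*} [Category 𝒞] [MonoidalCategory 𝒞] [SymmetricCategory 𝒞]
    {𝒟 : Type*} [Category 𝒟] [MonoidalCategory 𝒟] [SymmetricCategory 𝒟]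
    (L : 𝒞 ⥤ 𝒟) (R : 𝒟 ⥤ 𝒞) [R.LaxBraided] (adj : L ⊣ R)
    (h1ε : IsIso (ε R))
    (h1μ : ∀ D : Comon 𝒟, IsIso (μ R D.X D.X))
    (h2 : ∀ M : Comon 𝒞, ComonObj.comul (X := M.X) ≫ (β_ M.X M.X).hom = ComonObj.comul (X := M.X))
    (h3 : ∀ D : Comon 𝒟, Epi (adj.counit.app D.X)) :
    ∀ D : Comon 𝒟, ComonObj.comul (X := D.X) ≫ (β_ D.X D.X).hom = ComonObj.comul (X := D.X) := by
  intro D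
  haveI i1 : IsIso (μ R D.X D.X) := h1μ D
  haveI i2 : IsIso (μ R (D.X ⊗ D.X) (D.X ⊗ D.X)) := h1μ (D ⊗ D)
  -- μ at unit is iso
  haveI iL : IsIso (μ R (𝟙_ 𝒟) D.X) := by
    have h := (left_unitality R D.X).symm
    have : μ R (𝟙_ 𝒟) D.X = inv (ε R ▷ R.obj D.X) ≫ (λ_ (R.obj D.X)).hom ≫ inv (R.map (λ_ D.X).hom) := by
      rw [IsIso.eq_inv_comp, IsIso.eq_comp_inv, Category.assoc, h]
    rw [this]; infer_instance
  haveI iR : IsIso (μ R D.X (𝟙_ 𝒟)) := by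
    have h := (right_unitality R D.X).symm
    have : μ R D.X (𝟙_ 𝒟) = inv (R.obj D.X ◁ ε R) ≫ (ρ_ (R.obj D.X)).hom ≫ inv (R.map (ρ_ D.X).hom) := by
      rw [IsIso.eq_inv_comp, IsIso.eq_comp_inv, Category.assoc, h]
    rw [this]; infer_instance
  -- μ D.X (D.X ⊗ D.X) is mono
  haveI m1 : Mono (μ R D.X (D.X ⊗ D.X)) := by
    constructor
    intro W a b hab
    have hjp : (ComonObj.comul (X := D.X)) ≫ (D.X ◁ (ComonObj.counit (X := D.X)) ≫ (ρ_ D.X).hom) = 𝟙 D.X := by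
      rw [← Category.assoc, ComonObj.comul_counit D.X, Iso.inv_hom_id]
    have hnat := μ_natural_left R (ComonObj.comul (X := D.X)) (D.X ⊗ D.X)
    have h1 : a ≫ R.map (ComonObj.comul (X := D.X)) ▷ R.obj (D.X ⊗ D.X) = b ≫ R.map (ComonObj.comul (X := D.X)) ▷ R.obj (D.X ⊗ D.X) := by
      have := congrArg (fun t => t ≫ R.map ((ComonObj.comul (X := D.X)) ▷ (D.X ⊗ D.X))) hab
      simp only [Category.assoc] at this
      rw [← hnat, ← Category.assoc, ← Category.assoc] at this
      exact (cancel_mono (μ R (D.X ⊗ D.X) (D.X ⊗ D.X))).mp (by simpa [Category.assoc] using this)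
    have h2' := congrArg
      (fun t => t ≫ R.map (D.X ◁ (ComonObj.counit (X := D.X)) ≫ (ρ_ D.X).hom) ▷ R.obj (D.X ⊗ D.X)) h1
    simp only [Category.assoc, ← comp_whiskerRight, ← R.map_comp, hjp, R.map_id,
      id_whiskerRight, Category.comp_id] at h2'
    exact h2'
  -- the comonoid structure on R(D.X)
  let M : Comon 𝒞 :=
    { X := R.obj D.X
      comon.counit := R.map (ComonObj.counit (X := D.X)) ≫ inv (ε R)
      comon.comul := R.map (ComonObj.comul (X := D.X)) ≫ inv (μ R D.X D.X)
      comon.counit_comul := by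
        have e1 : inv (μ R D.X D.X) ≫ R.map (ComonObj.counit (X := D.X)) ▷ R.obj D.X =
            R.map ((ComonObj.counit (X := D.X)) ▷ D.X) ≫ inv (μ R (𝟙_ 𝒟) D.X) := by
          rw [IsIso.inv_comp_eq, ← Category.assoc, ← μ_natural_left, Category.assoc,
            IsIso.hom_inv_id, Category.comp_id]
        rw [comp_whiskerRight, Category.assoc, ← Category.assoc (inv (μ R D.X D.X)), e1]
        rw [← Category.assoc, ← Category.assoc, ← R.map_comp]
        have := ComonObj.counit_comul D.X
        rw [this]
        rw [← cancel_mono (λ_ (R.obj D.X)).hom, Iso.inv_hom_id, Category.assoc, Category.assoc,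
          left_unitality R D.X]
        simp [← comp_whiskerRight, ← R.map_comp]
      comon.comul_counit := by
        have e1 : inv (μ R D.X D.X) ≫ R.obj D.X ◁ R.map (ComonObj.counit (X := D.X)) =
            R.map (D.X ◁ (ComonObj.counit (X := D.X))) ≫ inv (μ R D.X (𝟙_ 𝒟)) := by
          rw [IsIso.inv_comp_eq, ← Category.assoc, ← μ_natural_right, Category.assoc,
            IsIso.hom_inv_id, Category.comp_id]
        rw [MonoidalCategory.whiskerLeft_comp, Category.assoc,
          ← Category.assoc (inv (μ R D.X D.X)), e1]
        rw [← Category.assoc, ← Category.assoc, ← R.map_comp]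
        have := ComonObj.comul_counit D.X
        rw [this]
        rw [← cancel_mono (ρ_ (R.obj D.X)).hom, Iso.inv_hom_id, Category.assoc, Category.assoc,
          right_unitality R D.X]
        simp [← R.map_comp]
      comon.comul_assoc := by
        rw [← cancel_mono (R.obj D.X ◁ μ R D.X D.X), ← cancel_mono (μ R D.X (D.X ⊗ D.X))]
        have eL : (R.map (ComonObj.comul (X := D.X)) ≫ inv (μ R D.X D.X)) ≫
            R.obj D.X ◁ (R.map (ComonObj.comul (X := D.X)) ≫ inv (μ R D.X D.X)) ≫ R.obj D.X ◁ μ R D.X D.X ≫ μ R D.X (D.X ⊗ D.X) =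
            R.map ((ComonObj.comul (X := D.X)) ≫ D.X ◁ (ComonObj.comul (X := D.X))) := by
          simp only [MonoidalCategory.whiskerLeft_comp, Category.assoc]
          simp only [← MonoidalCategory.whiskerLeft_comp_assoc, IsIso.inv_hom_id,
            MonoidalCategory.whiskerLeft_id, Category.id_comp]
          rw [μ_natural_right, IsIso.inv_hom_id_assoc, ← R.map_comp]
        have eR : ((R.map (ComonObj.comul (X := D.X)) ≫ inv (μ R D.X D.X)) ≫
            ((R.map (ComonObj.comul (X := D.X)) ≫ inv (μ R D.X D.X)) ▷ R.obj D.X) ≫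
              (α_ (R.obj D.X) (R.obj D.X) (R.obj D.X)).hom) ≫
              R.obj D.X ◁ μ R D.X D.X ≫ μ R D.X (D.X ⊗ D.X) =
            R.map ((ComonObj.comul (X := D.X)) ≫ (ComonObj.comul (X := D.X)) ▷ D.X ≫ (α_ D.X D.X D.X).hom) := by
          simp only [comp_whiskerRight, Category.assoc]
          rw [← associativity]
          simp only [← comp_whiskerRight_assoc, IsIso.inv_hom_id, id_whiskerRight,
            Category.id_comp]
          rw [μ_natural_left_assoc, IsIso.inv_hom_id_assoc]
          simp only [R.map_comp, Category.assoc]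
        simp only [Category.assoc] at eL eR ⊢
        rw [eL, eR, ComonObj.comul_assoc D.X] }
  have hβ : (R.map (ComonObj.comul (X := D.X)) ≫ inv (μ R D.X D.X)) ≫ (β_ (R.obj D.X) (R.obj D.X)).hom =
      R.map (ComonObj.comul (X := D.X)) ≫ inv (μ R D.X D.X) := h2 M
  have hb := Functor.LaxBraided.braided (F := R) D.X D.X
  have key : R.map ((ComonObj.comul (X := D.X)) ≫ (β_ D.X D.X).hom) = R.map (ComonObj.comul (X := D.X)) := by
    rw [R.map_comp]
    have e : inv (μ R D.X D.X) ≫ (β_ (R.obj D.X) (R.obj D.X)).hom ≫ μ R D.X D.X =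
        R.map (β_ D.X D.X).hom := by
      rw [IsIso.inv_comp_eq]; exact hb.symm
    rw [← e, ← Category.assoc, ← Category.assoc]
    rw [Category.assoc (R.map (ComonObj.comul (X := D.X))), ← Category.assoc, hβ, Category.assoc,
      IsIso.inv_hom_id, Category.comp_id]
  haveI := h3 D
  have hnat1 := adj.counit.naturality ((ComonObj.comul (X := D.X)) ≫ (β_ D.X D.X).hom)
  have hnat2 := adj.counit.naturality (ComonObj.comul (X := D.X))
  simp only [Functor.comp_map, Functor.id_map] at hnat1 hnat2
  rw [← cancel_epi (adj.counit.app D.X)]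
  rw [← hnat1, key, hnat2]
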